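/- As ξ → 0⁺, the quantity ξ · ∑_{n=0}^∞ 1/(e^{(2n+1)ξ} + 1) converges to (log 2)/2. -/

import Mathlib

open Real Filter Topology

private noncomputable def gfun (x : ℝ) : ℝ := Real.log (1 + Real.exp (-x))

private lemma gfun_hasDeriv (x : ℝ) :
    HasDerivAt gfun (-(1 / (Real.exp x + 1))) x := by
  have h1 : HasDerivAt (fun x : ℝ => 1 + Real.exp (-x)) (-Real.exp (-x)) x := by
    simpa using (((hasDerivAt_id x).neg.exp).const_add 1)
  have h2 : (1 : ℝ) + Real.exp (-x) ≠ 0 := by positivity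
  have := (h1.log h2)
  convert this using 1
  · rfl
  rw [Real.exp_neg]
  field_simp

private lemma gfun_slope {a b : ℝ} (hab : a < b) :
    (b - a) / (Real.exp b + 1) ≤ gfun a - gfun b ∧
      gfun a - gfun b ≤ (b - a) / (Real.exp a + 1) := by
  obtain ⟨c, hc, hceq⟩ := exists_hasDerivAt_eq_slope gfun (fun x => -(1 / (Real.exp x + 1)))
    hab (fun x _ => (gfun_hasDeriv x).continuousAt.continuousWithinAt)
    (fun x _ => gfun_hasDeriv x)
  have hba : (0:ℝ) < b - a := by linarith
  have key : gfun a - gfun b = (b - a) / (Real.exp c + 1) := by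
    field_simp at hceq ⊢
    nlinarith [Real.exp_pos c, hceq]
  rw [key]
  constructor
  · apply div_le_div_of_nonneg_left hba.le (by positivity)
    have := Real.exp_le_exp.2 hc.2.le
    linarith
  · apply div_le_div_of_nonneg_left hba.le (by positivity)
    have := Real.exp_le_exp.2 hc.1.le
    linarith

private lemma D_bounds {ξ : ℝ} (hξ : 0 < ξ) (n : ℕ) :
    2 * ξ * (1 / (Real.exp ((2 * n + 3) * ξ) + 1)) ≤
      gfun ((2 * n + 1) * ξ) - gfun ((2 * n + 3) * ξ) ∧
    gfun ((2 * n + 1) * ξ) - gfun ((2 * n + 3) * ξ) ≤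
      2 * ξ * (1 / (Real.exp ((2 * n + 1) * ξ) + 1)) := by
  have hn : (0:ℝ) ≤ (n:ℝ) := Nat.cast_nonneg n
  have hab : ((2 * n + 1) * ξ : ℝ) < (2 * n + 3) * ξ := by nlinarith
  have h := gfun_slope hab
  have he : ((2 * n + 3) * ξ : ℝ) - (2 * n + 1) * ξ = 2 * ξ := by ring
  rw [he] at h
  simp only [mul_one_div]; exact h

private lemma F_summable {ξ : ℝ} (hξ : 0 < ξ) :
    Summable (fun n : ℕ => 1 / (Real.exp ((2 * n + 1) * ξ) + 1)) := by
  have hg : Summable (fun n : ℕ => (Real.exp (-(2 * ξ))) ^ n) :=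
    summable_geometric_of_lt_one (Real.exp_pos _).le (Real.exp_lt_one_iff.2 (by linarith))
  refine Summable.of_nonneg_of_le (fun n => by positivity) (fun n => ?_) hg
  have hn : (0:ℝ) ≤ (n:ℝ) := Nat.cast_nonneg n
  have h1 : (Real.exp (-(2 * ξ))) ^ n = Real.exp (-(2 * n * ξ)) := by
    rw [← Real.exp_nat_mul]; ring_nf
  rw [h1, Real.exp_neg, one_div, inv_le_inv₀ (by positivity) (Real.exp_pos _)]
  have h2 : Real.exp (2 * n * ξ) ≤ Real.exp ((2 * n + 1) * ξ) := by
    apply Real.exp_le_exp.2; nlinarith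
  linarith

private lemma gfun_tendsto_zero : Tendsto gfun atTop (𝓝 0) := by
  have h1 : Tendsto (fun x : ℝ => 1 + Real.exp (-x)) atTop (𝓝 1) := by
    simpa using tendsto_const_nhds.add (Real.tendsto_exp_neg_atTop_nhds_zero)
  have := (Real.continuousAt_log (by norm_num : (1:ℝ) ≠ 0)).tendsto.comp h1
  rw [Real.log_one] at this; exact this

private lemma D_summable {ξ : ℝ} (hξ : 0 < ξ) :
    Summable (fun n : ℕ => gfun ((2 * n + 1) * ξ) - gfun ((2 * n + 3) * ξ)) := by
  apply Summable.of_nonneg_of_le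
  · intro n
    have h1 := (D_bounds hξ n).1
    have h2 : (0:ℝ) ≤ 2 * ξ * (1 / (Real.exp ((2 * n + 3) * ξ) + 1)) := by positivity
    linarith
  · exact fun n => (D_bounds hξ n).2
  · exact (F_summable hξ).mul_left _

private lemma D_hasSum {ξ : ℝ} (hξ : 0 < ξ) :
    HasSum (fun n : ℕ => gfun ((2 * n + 1) * ξ) - gfun ((2 * n + 3) * ξ)) (gfun ξ) := by
  rw [(D_summable hξ).hasSum_iff_tendsto_nat]
  have key : ∀ N : ℕ, ∑ n ∈ Finset.range N, (gfun ((2 * n + 1) * ξ) - gfun ((2 * n + 3) * ξ))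
      = gfun ξ - gfun ((2 * N + 1) * ξ) := by
    intro N
    have h0 := Finset.sum_range_sub' (fun n : ℕ => gfun ((2 * n + 1) * ξ)) N
    have h1 : ∑ n ∈ Finset.range N, (gfun ((2 * n + 1) * ξ) - gfun ((2 * n + 3) * ξ))
        = ∑ n ∈ Finset.range N,
          (gfun ((2 * n + 1) * ξ) - gfun ((2 * (n + 1 : ℕ) + 1) * ξ)) := by
      apply Finset.sum_congr rfl
      intro n _
      have : ((2 * ((n : ℝ) + 1) + 1) * ξ) = (2 * n + 3) * ξ := by ring
      push_cast
      rw [this]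
    rw [h1, h0]
    norm_num
  simp only [key]
  have h4 : Tendsto (fun N : ℕ => ((2 * N + 1) * ξ : ℝ)) atTop atTop := by
    apply Tendsto.atTop_mul_const hξ
    apply tendsto_atTop_add_const_right
    exact (tendsto_natCast_atTop_atTop).const_mul_atTop (by norm_num)
  have h5 := gfun_tendsto_zero.comp h4
  simpa using tendsto_const_nhds.sub h5

private lemma sandwich {ξ : ℝ} (hξ : 0 < ξ) :
    gfun ξ / 2 ≤ ξ * ∑' n : ℕ, 1 / (Real.exp ((2 * n + 1) * ξ) + 1) ∧
    ξ * ∑' n : ℕ, 1 / (Real.exp ((2 * n + 1) * ξ) + 1) ≤ ξ / 2 + gfun ξ / 2 := by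
  have hF := F_summable hξ
  have hD := D_hasSum hξ
  set S : ℝ := ∑' n : ℕ, 1 / (Real.exp ((2 * n + 1) * ξ) + 1) with hS
  -- lower bound : gfun ξ ≤ 2 ξ S
  have hlow : gfun ξ ≤ 2 * ξ * S := by
    rw [← hD.tsum_eq]
    calc ∑' n : ℕ, (gfun ((2 * n + 1) * ξ) - gfun ((2 * n + 3) * ξ))
        ≤ ∑' n : ℕ, 2 * ξ * (1 / (Real.exp ((2 * n + 1) * ξ) + 1)) :=
          Summable.tsum_le_tsum (fun n => (D_bounds hξ n).2) (D_summable hξ) (hF.mul_left _)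
      _ = 2 * ξ * S := tsum_mul_left
  -- upper bound : 2 ξ S ≤ ξ + gfun ξ
  have hshift : Summable (fun n : ℕ => 1 / (Real.exp ((2 * n + 3) * ξ) + 1)) := by
    have := (summable_nat_add_iff 1).2 hF
    apply this.congr
    intro n
    congr 3
    push_cast
    ring
  have hsplit : S = 1 / (Real.exp ξ + 1) + ∑' n : ℕ, 1 / (Real.exp ((2 * n + 3) * ξ) + 1) := by
    rw [hS, Summable.tsum_eq_zero_add hF]
    congr 1
    · norm_num
    · apply tsum_congr
      intro n
      congr 3
      push_cast
      ring
  have htail : ∑' n : ℕ, 2 * ξ * (1 / (Real.exp ((2 * n + 3) * ξ) + 1)) ≤ gfun ξ := by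
    rw [← hD.tsum_eq]
    exact Summable.tsum_le_tsum (fun n => (D_bounds hξ n).1) (hshift.mul_left _) (D_summable hξ)
  have hhigh : 2 * ξ * S ≤ ξ + gfun ξ := by
    rw [hsplit, mul_add]
    have h0 : 2 * ξ * (1 / (Real.exp ξ + 1)) ≤ ξ := by
      rw [mul_one_div, div_le_iff₀ (by positivity)]
      nlinarith [Real.one_le_exp hξ.le]
    have h1 : 2 * ξ * ∑' n : ℕ, 1 / (Real.exp ((2 * n + 3) * ξ) + 1) ≤ gfun ξ := by
      rw [← tsum_mul_left]; exact htail
    linarith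
  constructor <;> linarith

theorem riemann_sum_limit_log_two_div_two :
    Tendsto (fun ξ : ℝ => ξ * ∑' n : ℕ, 1 / (Real.exp ((2 * n + 1) * ξ) + 1))
      (𝓝[>] (0 : ℝ)) (𝓝 (Real.log 2 / 2)) := by
  have hcg : ContinuousAt gfun 0 := by
    apply ContinuousAt.log
    · exact (continuous_const.add (Real.continuous_exp.comp continuous_neg)).continuousAt
    · norm_num
  have hg0 : gfun 0 = Real.log 2 := by simp [gfun]; norm_num
  have hglim : Tendsto (fun ξ : ℝ => gfun ξ / 2) (𝓝[>] (0:ℝ)) (𝓝 (Real.log 2 / 2)) := by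
    have h := (hcg.tendsto.mono_left (nhdsWithin_le_nhds (s := Set.Ioi (0:ℝ)))).div_const 2
    rwa [hg0] at h
  have hhlim : Tendsto (fun ξ : ℝ => ξ / 2 + gfun ξ / 2) (𝓝[>] (0:ℝ))
      (𝓝 (Real.log 2 / 2)) := by
    have h1 : Tendsto (fun ξ : ℝ => ξ / 2) (𝓝[>] (0:ℝ)) (𝓝 0) := by
      have := (continuous_id.div_const (2:ℝ)).continuousAt (x := (0:ℝ))
      simpa using this.tendsto.mono_left nhdsWithin_le_nhds
    simpa using h1.add hglim
  refine tendsto_of_tendsto_of_tendsto_of_le_of_le' hglim hhlim ?_ ?_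
  · filter_upwards [self_mem_nhdsWithin] with ξ hξ
    exact (sandwich hξ).1
  · filter_upwards [self_mem_nhdsWithin] with ξ hξ
    exact (sandwich hξ).2
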